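/- An update can only increase the quality of a routing table: let rt be a routing table every entry of which has hop count (fifth component) at least 1 (a hypothesis guaranteed in all reachable protocol states), let dip ∈ kD(rt), and let r be an entry satisfying the preconditions π₄(r) = val, π₂(r) = 0 ⇔ π₃(r) = unk, and π₃(r) = unk ⇒ π₅(r) = 1. Then rt ⊑_dip update(rt,r). -/

import Mathlib

open Classical

noncomputable section

inductive K where
  | kno
  | unk
  deriving DecidableEq

inductive F where
  | val
  | inv
  deriving DecidableEq

/-- A routing table entry: destination, destination sequence number,
sequence-number-status flag, validity flag, hop count, next hop, precursors. -/
structure Entry (IP : Type) where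
  dip : IP
  dsn : ℕ
  dsk : K
  flag : F
  hops : ℕ
  nhip : IP
  pre : Set IP

variable {IP : Type}

/-- At most one entry per destination. -/
def isRT (rt : Set (Entry IP)) : Prop :=
  ∀ r ∈ rt, ∀ s ∈ rt, r.dip = s.dip → r = s

def kD (rt : Set (Entry IP)) : Set IP := {d | ∃ r ∈ rt, r.dip = d}

def vD (rt : Set (Entry IP)) : Set IP := {d | ∃ r ∈ rt, r.dip = d ∧ r.flag = F.val}

def iD (rt : Set (Entry IP)) : Set IP := {d | ∃ r ∈ rt, r.dip = d ∧ r.flag = F.inv}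

/-- The entry of `rt` for destination `d`, when it exists. -/
def sigmaRoute (rt : Set (Entry IP)) (d : IP) : Option (Entry IP) :=
  if h : ∃ r ∈ rt, r.dip = d then some h.choose else none

def sqn (rt : Set (Entry IP)) (d : IP) : ℕ :=
  ((sigmaRoute rt d).map Entry.dsn).getD 0

def flagRT (rt : Set (Entry IP)) (d : IP) : Option F :=
  (sigmaRoute rt d).map Entry.flag

def dhops (rt : Set (Entry IP)) (d : IP) : ℕ :=
  ((sigmaRoute rt d).map Entry.hops).getD 0

/-- Net sequence number of an entry. -/
def nsqnE (r : Entry IP) : ℕ :=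
  if r.flag = F.val ∨ r.dsn = 0 then r.dsn else r.dsn - 1

def nsqn (rt : Set (Entry IP)) (d : IP) : ℕ :=
  ((sigmaRoute rt d).map nsqnE).getD 0

def inc (n : ℕ) : ℕ := if n = 0 then 0 else n + 1

/-- The quality preorder `rt ⊑_d rt'`. -/
def rtLe (d : IP) (rt rt' : Set (Entry IP)) : Prop :=
  nsqn rt d < nsqn rt' d ∨ (nsqn rt d = nsqn rt' d ∧ dhops rt d ≥ dhops rt' d)

/-- The quality equivalence `rt ≈_d rt'`. -/
def rtEquiv (d : IP) (rt rt' : Set (Entry IP)) : Prop :=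
  rtLe d rt rt' ∧ rtLe d rt' rt

/-- The strict quality order `rt ⊏_d rt'`. -/
def rtLt (d : IP) (rt rt' : Set (Entry IP)) : Prop :=
  rtLe d rt rt' ∧ ¬ rtEquiv d rt rt'

/-- Add precursors to an entry. -/
def addpre (r : Entry IP) (npre : Set IP) : Entry IP := { r with pre := r.pre ∪ npre }

/-- Preconditions of `update`. -/
def updPre (r : Entry IP) : Prop :=
  r.flag = F.val ∧ (r.dsn = 0 ↔ r.dsk = K.unk) ∧ (r.dsk = K.unk → r.hops = 1)

/-- The update function on routing tables. -/
def update (rt : Set (Entry IP)) (r : Entry IP) : Set (Entry IP) :=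
  if h : ∃ s ∈ rt, s.dip = r.dip then
    let s := h.choose
    let nrt := rt \ {s}
    let nr := addpre r s.pre
    let nr' := { nr with dsn := s.dsn }
    let ns := addpre s r.pre
    if sqn rt r.dip < r.dsn ∨ (sqn rt r.dip = r.dsn ∧ dhops rt r.dip > r.hops)
        ∨ (sqn rt r.dip = r.dsn ∧ flagRT rt r.dip = some F.inv) then
      nrt ∪ {nr}
    else if r.dsk = K.unk then nrt ∪ {nr'}
    else nrt ∪ {ns}
  else rt ∪ {r}

/-- `dests` is a partial function IP ⇀ ℕ. -/
def isPartialFn (dests : Set (IP × ℕ)) : Prop :=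
  ∀ p ∈ dests, ∀ q ∈ dests, p.1 = q.1 → p.2 = q.2

/-- The invalidate function on routing tables. -/
def invalidate (rt : Set (Entry IP)) (dests : Set (IP × ℕ)) : Set (Entry IP) :=
  (fun r => if h : ∃ rsn, (r.dip, rsn) ∈ dests then
      { r with dsn := h.choose, flag := F.inv } else r) '' rt

/-- Adding precursors to the entry for a given destination. -/
def addprecRT (rt : Set (Entry IP)) (d : IP) (npre : Set IP) : Set (Entry IP) :=
  if h : ∃ s ∈ rt, s.dip = d then (rt \ {h.choose}) ∪ {addpre h.choose npre} else rt

theorem sigma_unique {IP : Type} {S : Set (Entry IP)} {e : Entry IP} {d : IP}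
    (he : e ∈ S) (hd : e.dip = d)
    (huniq : ∀ f ∈ S, f.dip = d → f = e) : sigmaRoute S d = some e := by
  unfold sigmaRoute
  have hx : ∃ r ∈ S, r.dip = d := ⟨e, he, hd⟩
  rw [dif_pos hx]
  exact congrArg some (huniq _ hx.choose_spec.1 hx.choose_spec.2)

theorem nsqnE_le {IP : Type} (e : Entry IP) : nsqnE e ≤ e.dsn := by
  unfold nsqnE; split <;> omega

/-- An update can only increase the quality of a routing table. -/
theorem nsqn_of_sigma {IP : Type} {S : Set (Entry IP)} {d : IP} {e : Entry IP}
    (h : sigmaRoute S d = some e) : nsqn S d = nsqnE e := by simp [nsqn, h]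

theorem dhops_of_sigma {IP : Type} {S : Set (Entry IP)} {d : IP} {e : Entry IP}
    (h : sigmaRoute S d = some e) : dhops S d = e.hops := by simp [dhops, h]

theorem update_quality_increase (IP : Type) (rt : Set (Entry IP)) (hrt : isRT rt)
    (hpos : ∀ e ∈ rt, 1 ≤ e.hops)
    (dip : IP) (hdip : dip ∈ kD rt)
    (r : Entry IP) (hr : updPre r) :
    rtLe dip rt (update rt r) := by
  obtain ⟨e, he, hed⟩ := hdip
  have hsig : sigmaRoute rt dip = some e :=
    sigma_unique he hed (fun f hf hfd => hrt f hf e he (hfd.trans hed.symm))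
  by_cases hdr : dip = r.dip
  · subst hdr
    have hex : ∃ s ∈ rt, s.dip = r.dip := ⟨e, he, hed⟩
    have hce : hex.choose = e :=
      hrt _ hex.choose_spec.1 e he (hex.choose_spec.2.trans hed.symm)
    have hsqn : sqn rt r.dip = e.dsn := by simp [sqn, hsig]
    have hdh : dhops rt r.dip = e.hops := by simp [dhops, hsig]
    have hfl : flagRT rt r.dip = some e.flag := by simp [flagRT, hsig]
    have hnsq : nsqn rt r.dip = nsqnE e := by simp [nsqn, hsig]
    have hpe : 1 ≤ e.hops := hpos e he
    have key : ∀ x : Entry IP, x.dip = r.dip →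
        sigmaRoute ((rt \ {e}) ∪ {x}) r.dip = some x := by
      intro x hx
      apply sigma_unique (Or.inr rfl) hx
      rintro f (⟨hf, hfne⟩ | hfx)
      · intro hfd; exact absurd (hrt f hf e he (hfd.trans hed.symm)) hfne
      · intro _; exact hfx
    simp only [update, dif_pos hex, hce]
    split_ifs with hC hK
    · -- new entry nr = addpre r e.pre
      have hsigT := key (addpre r e.pre) rfl
      have hnsqT := nsqn_of_sigma hsigT
      have hdhT := dhops_of_sigma hsigT
      rw [show nsqnE (addpre r e.pre) = r.dsn by simp [nsqnE, addpre, hr.1]] at hnsqT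
      rw [show (addpre r e.pre).hops = r.hops from rfl] at hdhT
      rw [rtLe, hnsq, hnsqT, hdh, hdhT]
      rw [hsqn, hdh, hfl] at hC
      have hle := nsqnE_le e
      rcases hC with h1 | ⟨h2, h3⟩ | ⟨h2, h4⟩
      · exact Or.inl (lt_of_le_of_lt hle h1)
      · rcases lt_or_eq_of_le hle with h | h
        · exact Or.inl (h2 ▸ h)
        · exact Or.inr ⟨h ▸ h2, le_of_lt h3⟩
      · have hinv : e.flag = F.inv := by injection h4
        by_cases hz : e.dsn = 0
        · have hrz : r.dsn = 0 := by omega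
          have hhops : r.hops = 1 := hr.2.2 (hr.2.1.mp hrz)
          have : nsqnE e = e.dsn := by simp [nsqnE, hz]
          exact Or.inr ⟨by omega, by omega⟩
        · have : nsqnE e = e.dsn - 1 := by simp [nsqnE, hinv, hz]
          exact Or.inl (by omega)
    · -- nr' with dsn := e.dsn
      have hsigT := key { addpre r e.pre with dsn := e.dsn } rfl
      have hnsqT := nsqn_of_sigma hsigT
      have hdhT := dhops_of_sigma hsigT
      rw [show nsqnE { addpre r e.pre with dsn := e.dsn } = e.dsn by
        simp [nsqnE, addpre, hr.1]] at hnsqT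
      rw [show ({ addpre r e.pre with dsn := e.dsn } : Entry IP).hops = r.hops
        from rfl] at hdhT
      rw [rtLe, hnsq, hnsqT, hdh, hdhT]
      have hle := nsqnE_le e
      have hhops : r.hops = 1 := hr.2.2 hK
      rcases lt_or_eq_of_le hle with h | h
      · exact Or.inl h
      · exact Or.inr ⟨h, by omega⟩
    · -- ns = addpre e r.pre
      have hsigT := key (addpre e r.pre) hed
      have hnsqT := nsqn_of_sigma hsigT
      have hdhT := dhops_of_sigma hsigT
      rw [show nsqnE (addpre e r.pre) = nsqnE e from rfl] at hnsqT
      rw [show (addpre e r.pre).hops = e.hops from rfl] at hdhT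
      rw [rtLe, hnsq, hnsqT, hdh, hdhT]
      exact Or.inr ⟨rfl, le_refl _⟩
  · -- dip ≠ r.dip : entry for dip is untouched
    have hsigT : sigmaRoute (update rt r) dip = some e := by
      by_cases hex : ∃ s ∈ rt, s.dip = r.dip
      · have hcd : hex.choose.dip = r.dip := hex.choose_spec.2
        have key : ∀ x : Entry IP, x.dip = r.dip →
            sigmaRoute ((rt \ {hex.choose}) ∪ {x}) dip = some e := by
          intro x hx
          apply sigma_unique (Or.inl ⟨he, fun hcon => by
            apply hdr; rw [← hed]
            rcases hcon with rfl; exact hcd⟩) hed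
          rintro f (⟨hf, _⟩ | rfl)
          · intro hfd; exact hrt f hf e he (hfd.trans hed.symm)
          · intro hfd; exact absurd (hfd.symm.trans hx) hdr
        simp only [update, dif_pos hex]
        split_ifs with hC hK
        · exact key _ rfl
        · exact key _ rfl
        · exact key _ hcd
      · simp only [update, dif_neg hex]
        apply sigma_unique (Or.inl he) hed
        rintro f (hf | rfl)
        · intro hfd; exact hrt f hf e he (hfd.trans hed.symm)
        · intro hfd; exact absurd hfd.symm hdr
    have h1 := nsqn_of_sigma hsig
    have h2 := nsqn_of_sigma hsigT
    have h3 := dhops_of_sigma hsig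
    have h4 := dhops_of_sigma hsigT
    exact Or.inr ⟨h1.trans h2.symm, (h3.trans h4.symm).ge⟩

end
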